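/- Let n ≥ 3. The group Aut⁰(G_n) of automorphisms of G_n that restrict to the identity on A_n and induce the identity on W_n = G_n/A_n is exactly t(M_0), the group of translation automorphisms t_𝔞 with 𝔞 a matrix whose diagonal entries are all zero. -/

import Mathlib

def HWrels (n : ℕ) : Set (FreeGroup (Fin n)) :=
  {r | ∃ i j : Fin n, i ≠ j ∧
    r = (FreeGroup.of i)⁻¹ * FreeGroup.of j ^ 2 * FreeGroup.of i * FreeGroup.of j ^ 2}

abbrev HW (n : ℕ) : Type := PresentedGroup (HWrels n)

def x (n : ℕ) (i : Fin n) : HW n := PresentedGroup.of i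

def A (n : ℕ) : Subgroup (HW n) := Subgroup.closure (Set.range fun i => x n i ^ 2)

theorem HW.relation (n : ℕ) {i j : Fin n} (h : i ≠ j) :
    (x n i)⁻¹ * x n j ^ 2 * x n i * x n j ^ 2 = 1 := by
  have hr : ((FreeGroup.of i)⁻¹ * FreeGroup.of j ^ 2 * FreeGroup.of i * FreeGroup.of j ^ 2)
      ∈ HWrels n := ⟨i, j, h, rfl⟩
  have h2 : PresentedGroup.mk (HWrels n)
      ((FreeGroup.of i)⁻¹ * FreeGroup.of j ^ 2 * FreeGroup.of i * FreeGroup.of j ^ 2) = 1 :=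
    (QuotientGroup.eq_one_iff _).mpr (Subgroup.subset_normalClosure hr)
  rw [map_mul, map_mul, map_mul, map_inv, map_pow] at h2
  exact h2

theorem HW.conj_sq_mem (n : ℕ) (k j : Fin n) :
    x n k * x n j ^ 2 * (x n k)⁻¹ ∈ A n ∧ (x n k)⁻¹ * x n j ^ 2 * x n k ∈ A n := by
  have hj : x n j ^ 2 ∈ A n := Subgroup.subset_closure ⟨j, rfl⟩
  by_cases h : k = j
  · subst h
    have e1 : x n k * x n k ^ 2 * (x n k)⁻¹ = x n k ^ 2 := by group
    have e2 : (x n k)⁻¹ * x n k ^ 2 * x n k = x n k ^ 2 := by group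
    rw [e1, e2]; exact ⟨hj, hj⟩
  · have hrel := HW.relation n h
    have e2 : (x n k)⁻¹ * x n j ^ 2 * x n k = (x n j ^ 2)⁻¹ :=
      mul_eq_one_iff_eq_inv.mp hrel
    have h3 : x n j ^ 2 = x n k * (x n j ^ 2)⁻¹ * (x n k)⁻¹ := by
      rw [← e2]; group
    have e1 : x n k * x n j ^ 2 * (x n k)⁻¹ = (x n j ^ 2)⁻¹ := by
      calc x n k * x n j ^ 2 * (x n k)⁻¹
          = (x n k * (x n j ^ 2)⁻¹ * (x n k)⁻¹)⁻¹ := by group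
        _ = (x n j ^ 2)⁻¹ := by rw [← h3]
    rw [e1, e2]
    exact ⟨Subgroup.inv_mem _ hj, Subgroup.inv_mem _ hj⟩

instance A_normal (n : ℕ) : (A n).Normal := by
  let K : Subgroup (HW n) :=
    { carrier := {g | (∀ a ∈ A n, g * a * g⁻¹ ∈ A n) ∧ (∀ a ∈ A n, g⁻¹ * a * g ∈ A n)}
      one_mem' := by simp
      mul_mem' := by
        rintro g h ⟨hg1, hg2⟩ ⟨hh1, hh2⟩
        constructor
        · intro a ha
          have := hg1 _ (hh1 a ha)
          have e : g * (h * a * h⁻¹) * g⁻¹ = g * h * a * (g * h)⁻¹ := by group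
          rwa [e] at this
        · intro a ha
          have := hh2 _ (hg2 a ha)
          have e : h⁻¹ * (g⁻¹ * a * g) * h = (g * h)⁻¹ * a * (g * h) := by group
          rwa [e] at this
      inv_mem' := by
        rintro g ⟨hg1, hg2⟩
        constructor
        · intro a ha
          have := hg2 a ha
          have e : g⁻¹ * a * g = g⁻¹ * a * g⁻¹⁻¹ := by group
          rwa [e] at this
        · intro a ha
          have := hg1 a ha
          have e : g * a * g⁻¹ = g⁻¹⁻¹ * a * g⁻¹ := by group
          rwa [e] at this }
  have hgen : ∀ j : Fin n, PresentedGroup.of (rels := HWrels n) j ∈ K := by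
    intro j
    show (∀ a ∈ A n, x n j * a * (x n j)⁻¹ ∈ A n) ∧ (∀ a ∈ A n, (x n j)⁻¹ * a * x n j ∈ A n)
    constructor
    · intro a ha
      refine Subgroup.closure_induction ?_ ?_ ?_ ?_ ha
      · rintro b ⟨i, rfl⟩
        exact (HW.conj_sq_mem n j i).1
      · simpa using Subgroup.one_mem (A n)
      · intro b c _ _ hb hc
        have e : x n j * (b * c) * (x n j)⁻¹
            = (x n j * b * (x n j)⁻¹) * (x n j * c * (x n j)⁻¹) := by group
        rw [e]; exact Subgroup.mul_mem _ hb hc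
      · intro b _ hb
        have e : x n j * b⁻¹ * (x n j)⁻¹ = (x n j * b * (x n j)⁻¹)⁻¹ := by group
        rw [e]; exact Subgroup.inv_mem _ hb
    · intro a ha
      refine Subgroup.closure_induction ?_ ?_ ?_ ?_ ha
      · rintro b ⟨i, rfl⟩
        exact (HW.conj_sq_mem n j i).2
      · simpa using Subgroup.one_mem (A n)
      · intro b c _ _ hb hc
        have e : (x n j)⁻¹ * (b * c) * x n j
            = ((x n j)⁻¹ * b * x n j) * ((x n j)⁻¹ * c * x n j) := by group
        rw [e]; exact Subgroup.mul_mem _ hb hc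
      · intro b _ hb
        have e : (x n j)⁻¹ * b⁻¹ * x n j = ((x n j)⁻¹ * b * x n j)⁻¹ := by group
        rw [e]; exact Subgroup.inv_mem _ hb
  constructor
  intro a ha g
  exact ((PresentedGroup.generated_by (HWrels n) K hgen g).1) a ha

/-- A type synonym for `M = M_n(ℤ)`, carrying the monoid structure given by
`𝔞 * 𝔟 = [c_ij]` with `c_ij = a_ij + (1 + 2 a_jj) b_ij`. -/
def MM (n : ℕ) : Type := Matrix (Fin n) (Fin n) ℤ

instance (n : ℕ) : Mul (MM n) :=
  ⟨fun 𝔞 𝔟 i j => 𝔞 i j + (1 + 2 * 𝔞 j j) * 𝔟 i j⟩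

instance (n : ℕ) : One (MM n) := ⟨fun _ _ => (0 : ℤ)⟩

theorem MM.mul_apply {n : ℕ} (𝔞 𝔟 : MM n) (i j : Fin n) :
    (𝔞 * 𝔟) i j = 𝔞 i j + (1 + 2 * 𝔞 j j) * 𝔟 i j := rfl

theorem MM.one_apply {n : ℕ} (i j : Fin n) : (1 : MM n) i j = 0 := rfl

theorem MM.ext {n : ℕ} {𝔞 𝔟 : MM n} (h : ∀ i j, 𝔞 i j = 𝔟 i j) : 𝔞 = 𝔟 :=
  funext fun i => funext fun j => h i j

instance (n : ℕ) : Monoid (MM n) where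
  mul_assoc a b c := MM.ext fun i j => by
    simp only [MM.mul_apply]; ring
  one_mul a := MM.ext fun i j => by simp only [MM.mul_apply, MM.one_apply]; ring
  mul_one a := MM.ext fun i j => by simp only [MM.mul_apply, MM.one_apply]; ring

/-- For an `n × n` integer matrix `𝔞 = [a_ij]`, the element
`a_i = (x_1²)^{a_i1} ⋯ (x_n²)^{a_in}` of `A_n ≤ G_n`. -/
def aElt (n : ℕ) (𝔞 : MM n) (i : Fin n) : HW n :=
  ((List.finRange n).map fun j => (x n j ^ 2) ^ 𝔞 i j).prod

/-- The quotient `W_n = G_n / A_n`. -/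
abbrev Wq (n : ℕ) : Type := HW n ⧸ A n

namespace HWaux

variable {n : ℕ}

def sq (n : ℕ) (i : Fin n) : HW n := x n i ^ 2

theorem sq_mem (n : ℕ) (i : Fin n) : sq n i ∈ A n := Subgroup.subset_closure ⟨i, rfl⟩

theorem conj_sq (n : ℕ) {i j : Fin n} (h : i ≠ j) :
    (x n i)⁻¹ * sq n j * x n i = (sq n j)⁻¹ :=
  mul_eq_one_iff_eq_inv.mp (HW.relation n h)

theorem comm_sq (n : ℕ) (i j : Fin n) : Commute (sq n i) (sq n j) := by
  rcases eq_or_ne i j with rfl | h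
  · exact Commute.refl _
  · have h1 := conj_sq n h
    have h2 : (x n i)⁻¹ * (sq n j)⁻¹ * x n i = sq n j := by
      rw [show (x n i)⁻¹ * (sq n j)⁻¹ * x n i = ((x n i)⁻¹ * sq n j * x n i)⁻¹ by group,
        h1, inv_inv]
    have h3 : (sq n i)⁻¹ * sq n j * sq n i = sq n j := by
      have e : (sq n i)⁻¹ * sq n j * sq n i
          = (x n i)⁻¹ * ((x n i)⁻¹ * sq n j * x n i) * x n i := by
        show ((x n i) ^ 2)⁻¹ * sq n j * (x n i) ^ 2 = _
        rw [pow_two]; group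
      rw [e, h1, h2]
    show sq n i * sq n j = sq n j * sq n i
    conv_lhs => rw [← h3]
    group

theorem comm_zpow (n : ℕ) (i j : Fin n) (a b : ℤ) :
    Commute (sq n i ^ a) (sq n j ^ b) := (comm_sq n i j).zpow_zpow a b

def Pl (n : ℕ) (l : List (Fin n)) (m : Fin n → ℤ) : HW n :=
  (l.map fun j => sq n j ^ m j).prod

theorem Pl_nil (m : Fin n → ℤ) : Pl n [] m = 1 := rfl

theorem Pl_cons (a : Fin n) (l : List (Fin n)) (m : Fin n → ℤ) :
    Pl n (a :: l) m = sq n a ^ m a * Pl n l m := by simp [Pl]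

theorem commute_Pl (i : Fin n) (c : ℤ) (l : List (Fin n)) (m : Fin n → ℤ) :
    Commute (sq n i ^ c) (Pl n l m) := by
  apply Commute.list_prod_right
  intro y hy
  rw [List.mem_map] at hy
  obtain ⟨j, -, rfl⟩ := hy
  exact comm_zpow n i j c (m j)

theorem Pl_add (l : List (Fin n)) (m m' : Fin n → ℤ) :
    Pl n l m * Pl n l m' = Pl n l (m + m') := by
  induction l with
  | nil => simp [Pl]
  | cons a t ih =>
    rw [Pl_cons, Pl_cons, Pl_cons]
    have hc : Pl n t m * sq n a ^ m' a = sq n a ^ m' a * Pl n t m :=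
      ((commute_Pl a (m' a) t m).symm).eq
    calc sq n a ^ m a * Pl n t m * (sq n a ^ m' a * Pl n t m')
        = sq n a ^ m a * (Pl n t m * sq n a ^ m' a) * Pl n t m' := by group
      _ = sq n a ^ m a * (sq n a ^ m' a * Pl n t m) * Pl n t m' := by rw [hc]
      _ = sq n a ^ m a * sq n a ^ m' a * (Pl n t m * Pl n t m') := by group
      _ = sq n a ^ ((m + m') a) * Pl n t (m + m') := by
          rw [ih, ← zpow_add]; rfl

theorem Pl_eq_one (l : List (Fin n)) (m : Fin n → ℤ) (h : ∀ j ∈ l, m j = 0) :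
    Pl n l m = 1 := by
  induction l with
  | nil => rfl
  | cons a t ih =>
    rw [Pl_cons, h a List.mem_cons_self, zpow_zero, one_mul]
    exact ih fun j hj => h j (List.mem_cons_of_mem a hj)

theorem Pl_single {l : List (Fin n)} (hl : l.Nodup) {j : Fin n} (hj : j ∈ l) (c : ℤ) :
    Pl n l (Pi.single j c) = sq n j ^ c := by
  induction l with
  | nil => exact absurd hj List.not_mem_nil
  | cons a t ih =>
    rw [List.nodup_cons] at hl
    rw [Pl_cons]
    rcases List.mem_cons.mp hj with rfl | hjt
    · have h1 : Pl n t (Pi.single j c) = 1 := by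
        apply Pl_eq_one
        intro k hk
        have hkj : k ≠ j := fun h => hl.1 (h ▸ hk)
        exact Pi.single_eq_of_ne (M := fun _ : Fin n => ℤ) hkj c
      rw [Pi.single_eq_same, h1, mul_one]
    · have hja : j ≠ a := by rintro rfl; exact hl.1 hjt
      rw [Pi.single_eq_of_ne (Ne.symm hja), zpow_zero, one_mul]
      exact ih hl.2 hjt

theorem conj_Pl (i : Fin n) (l : List (Fin n)) (m : Fin n → ℤ) :
    (x n i)⁻¹ * Pl n l m * x n i = Pl n l (fun j => if i = j then m j else -m j) := by
  induction l with
  | nil => simp [Pl]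
  | cons a t ih =>
    rw [Pl_cons, Pl_cons]
    have key : (x n i)⁻¹ * (sq n a ^ m a * Pl n t m) * x n i
        = ((x n i)⁻¹ * sq n a ^ m a * x n i) * ((x n i)⁻¹ * Pl n t m * x n i) := by group
    rw [key, ih]
    congr 1
    have e : (x n i)⁻¹ * sq n a ^ m a * x n i = ((x n i)⁻¹ * sq n a * x n i) ^ m a := by
      rw [show (x n i)⁻¹ * sq n a * x n i = (x n i)⁻¹ * sq n a * ((x n i)⁻¹)⁻¹ by
        rw [inv_inv], conj_zpow, inv_inv]
    rcases eq_or_ne i a with rfl | h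
    · have hx : (x n i)⁻¹ * sq n i * x n i = sq n i := by
        show (x n i)⁻¹ * (x n i) ^ 2 * x n i = (x n i) ^ 2
        rw [pow_two]; group
      rw [e, hx, if_pos rfl]
    · rw [e, conj_sq n h, if_neg h, inv_zpow, ← zpow_neg]

def P (n : ℕ) (m : Fin n → ℤ) : HW n := Pl n (List.finRange n) m

theorem P_add (m m' : Fin n → ℤ) : P n m * P n m' = P n (m + m') := Pl_add _ m m'

theorem P_single (j : Fin n) (c : ℤ) : P n (Pi.single j c) = sq n j ^ c :=
  Pl_single (List.nodup_finRange n) (List.mem_finRange j) c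

theorem P_zero : P n (0 : Fin n → ℤ) = 1 := Pl_eq_one _ _ fun _ _ => rfl

theorem P_inv (m : Fin n → ℤ) : (P n m)⁻¹ = P n (-m) := by
  apply inv_eq_of_mul_eq_one_right
  rw [P_add]
  simp [P_zero]

theorem conj_P (i : Fin n) (m : Fin n → ℤ) :
    (x n i)⁻¹ * P n m * x n i = P n (fun j => if i = j then m j else -m j) :=
  conj_Pl i _ m

theorem P_mem (m : Fin n → ℤ) : P n m ∈ A n := by
  apply Subgroup.list_prod_mem
  intro g hg
  rw [List.mem_map] at hg
  obtain ⟨j, -, rfl⟩ := hg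
  exact Subgroup.zpow_mem _ (sq_mem n j) _

theorem A_rep {a : HW n} (ha : a ∈ A n) : ∃ m : Fin n → ℤ, a = P n m := by
  refine Subgroup.closure_induction ?_ ?_ ?_ ?_ ha
  · rintro b ⟨i, rfl⟩
    exact ⟨Pi.single i 1, by rw [P_single, zpow_one]; rfl⟩
  · exact ⟨0, P_zero.symm⟩
  · rintro b c _ _ ⟨m, rfl⟩ ⟨m', rfl⟩
    exact ⟨m + m', P_add m m'⟩
  · rintro b _ ⟨m, rfl⟩
    exact ⟨-m, P_inv m⟩

theorem key_sq (i : Fin n) (m : Fin n → ℤ) :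
    (x n i * P n m) ^ 2 = x n i ^ 2 * sq n i ^ (2 * m i) := by
  have hm : ((fun j => if i = j then m j else -m j) + m) = Pi.single i (2 * m i) := by
    funext j
    rcases eq_or_ne i j with rfl | h
    · simp only [Pi.add_apply, Pi.single_eq_same, if_true, eq_self_iff_true]; ring
    · simp only [Pi.add_apply, if_neg h, Pi.single_eq_of_ne (Ne.symm h)]; ring
  calc (x n i * P n m) ^ 2
      = x n i ^ 2 * (((x n i)⁻¹ * P n m * x n i) * P n m) := by rw [pow_two, pow_two]; group
    _ = x n i ^ 2 * sq n i ^ (2 * m i) := by rw [conj_P, P_add, hm, P_single]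

end HWaux

namespace HWaux

variable {n : ℕ}

def fperm (n : ℕ) (i : Fin n) : Fin n → Equiv.Perm ℤ :=
  fun j => if j = i then Equiv.addRight 1 else Equiv.neg ℤ

theorem neg_sq : (Equiv.neg ℤ : Equiv.Perm ℤ) ^ 2 = 1 := by
  ext z
  simp [pow_two, Equiv.Perm.mul_apply]

theorem fperm_lift (i : Fin n) :
    ∀ r ∈ HWrels n, FreeGroup.lift (fperm n i) r = 1 := by
  rintro r ⟨k, l, hkl, rfl⟩
  simp only [map_mul, map_inv, map_pow, FreeGroup.lift_apply_of]
  by_cases hl : l = i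
  · subst hl
    have hk : k ≠ l := hkl
    simp only [fperm, if_neg hk, if_pos rfl]
    ext z
    simp [pow_two, Equiv.Perm.mul_apply, Equiv.Perm.inv_def]
  · rw [show fperm n i l = Equiv.neg ℤ from if_neg hl, neg_sq, mul_one, mul_one,
      inv_mul_cancel]

theorem sq_torsionfree (i : Fin n) {k : ℤ} (h : sq n i ^ k = 1) : k = 0 := by
  let ψ : HW n →* Equiv.Perm ℤ := PresentedGroup.toGroup (fperm_lift i)
  have h1 : ψ (x n i) = Equiv.addRight 1 := by
    show PresentedGroup.toGroup (fperm_lift i) (PresentedGroup.of i) = _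
    rw [PresentedGroup.toGroup.of]
    simp [fperm]
  have h2 : ψ (sq n i ^ k) = Equiv.addRight (k * 2) := by
    rw [map_zpow, show sq n i = x n i ^ 2 from rfl, map_pow, h1]
    have e2 : (Equiv.addRight (1:ℤ)) ^ 2 = Equiv.addRight 2 := by
      ext z; simp only [pow_two, Equiv.Perm.mul_apply, Equiv.coe_addRight]; ring
    have key : ∀ j : ℤ, (Equiv.addRight (1:ℤ) ^ 2) ^ j = Equiv.addRight (j * 2) := by
      intro j
      rw [e2]
      refine Int.induction_on j ?_ ?_ ?_
      · ext z; simp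
      · intro j ih
        rw [zpow_add_one, ih]; ext z; simp only [Equiv.Perm.mul_apply, Equiv.coe_addRight]; ring
      · intro j ih
        rw [zpow_sub_one, ih, mul_inv_eq_iff_eq_mul]; ext z
        simp only [Equiv.Perm.mul_apply, Equiv.coe_addRight]; ring
    exact key k
  rw [h, map_one] at h2
  have h3 : ((1 : Equiv.Perm ℤ) : ℤ → ℤ) 0 = (Equiv.addRight (k * 2)) 0 := by rw [h2]
  simp [Equiv.coe_addRight] at h3
  omega

theorem aElt_eq_P (𝔞 : MM n) (i : Fin n) : aElt n 𝔞 i = P n (fun j => 𝔞 i j) := rfl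

theorem aElt_mem (𝔞 : MM n) (i : Fin n) : aElt n 𝔞 i ∈ A n := by
  rw [aElt_eq_P]; exact P_mem _

end HWaux


open HWaux in
/-- Lemma `aut-0`: for `n ≥ 3`, an automorphism of `G_n` restricts to the
identity on `A_n` and induces the identity on `W_n = G_n/A_n` if and only if it is a
translation automorphism `t_𝔞` with `𝔞` having zero diagonal, i.e. `Aut⁰(G_n) = t(M_0)`. -/
theorem stmt17 (n : ℕ) (hn : 3 ≤ n) (α : MulAut (HW n)) :
    ((∀ a ∈ A n, α a = a) ∧
      (∀ g : HW n, (QuotientGroup.mk (α g) : Wq n) = QuotientGroup.mk g)) ↔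
    ∃ 𝔞 : MM n, (∀ i, 𝔞 i i = 0) ∧ ∀ i, α (x n i) = x n i * aElt n 𝔞 i := by
  constructor
  · rintro ⟨hfix, hquot⟩
    have hex : ∀ i, ∃ m : Fin n → ℤ, α (x n i) = x n i * P n m := by
      intro i
      have h1 : ((x n i)⁻¹ * α (x n i)) ∈ A n := by
        rw [← QuotientGroup.eq]
        exact (hquot (x n i)).symm
      obtain ⟨m, hm⟩ := A_rep h1
      exact ⟨m, by rw [← hm, mul_inv_cancel_left]⟩
    choose m hm using hex
    have hdiag : ∀ i, m i i = 0 := by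
      intro i
      have h2 : α (x n i ^ 2) = x n i ^ 2 := hfix _ (sq_mem n i)
      have h3 : α (x n i) ^ 2 = x n i ^ 2 := by rw [← map_pow, h2]
      rw [hm i, key_sq] at h3
      have h4 : sq n i ^ (2 * m i i) = 1 :=
        mul_left_cancel (h3.trans (mul_one ((x n i) ^ 2)).symm)
      have := sq_torsionfree i h4
      omega
    exact ⟨(fun i j => m i j : MM n), hdiag, fun i => by exact hm i⟩
  · rintro ⟨𝔞, hdiag, hα⟩
    have hfixgen : ∀ i, α (x n i ^ 2) = x n i ^ 2 := by
      intro i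
      rw [map_pow, hα i, aElt_eq_P, key_sq, hdiag i]
      norm_num
    constructor
    · intro a ha
      refine Subgroup.closure_induction ?_ ?_ ?_ ?_ ha
      · rintro b ⟨i, rfl⟩; exact hfixgen i
      · exact map_one α
      · intro b c _ _ hb hc; rw [map_mul, hb, hc]
      · intro b _ hb; rw [map_inv, hb]
    · intro g
      have key : g ∈ MonoidHom.eqLocus
          ((QuotientGroup.mk' (A n)).comp α.toMonoidHom) (QuotientGroup.mk' (A n)) := by
        apply PresentedGroup.generated_by
        intro j
        show (QuotientGroup.mk' (A n)) (α (PresentedGroup.of j))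
            = (QuotientGroup.mk' (A n)) (PresentedGroup.of j)
        have : α (x n j) = x n j * aElt n 𝔞 j := hα j
        rw [show (PresentedGroup.of j : HW n) = x n j from rfl, this, map_mul]
        rw [show (QuotientGroup.mk' (A n)) (aElt n 𝔞 j) = 1 from
          (QuotientGroup.eq_one_iff _).mpr (aElt_mem 𝔞 j), mul_one]
      exact key
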